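/- With H and H' as above, if the ground energy of H satisfies 0 < μ₁ ≤ E_0 ≤ 1 - μ₂ < 1, then A_1(H) - 2 A_1(H') ≥ μ₁/(1-μ₁) - (d_0/2^n)·(1/(μ₁ μ₂)). -/

import Mathlib

open Finset

/-- The ground energy `E₀` of a diagonal Hamiltonian on `n` qubits, given by its
diagonal entries `e : Fin (2^n) → ℝ`. -/
noncomputable def groundEnergy (n : ℕ) (e : Fin (2 ^ n) → ℝ) : ℝ :=
  Finset.univ.inf' ⟨⟨0, pow_pos (by norm_num : (0 : ℕ) < 2) n⟩, Finset.mem_univ _⟩ e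

/-- `A₁(H) = 2⁻ⁿ ∑_{k=1}^{M-1} d_k/(E_k - E_0)`, written in terms of the diagonal
entries of `H`: `A₁ = 2⁻ⁿ ∑_{i : e i ≠ E₀} 1/(e i - E₀)`. -/
noncomputable def A1diag (n : ℕ) (e : Fin (2 ^ n) → ℝ) : ℝ :=
  ((2 : ℝ) ^ n)⁻¹ *
    ∑ i, if e i = groundEnergy n e then 0 else (e i - groundEnergy n e)⁻¹

/-- The diagonal entries of `H' = H ⊗ (I + σ_z)/2 = H ⊗ |0⟩⟨0|` on `n+1` qubits:
the `|0⟩` sector carries the spectrum of `H`, the `|1⟩` sector carries eigenvalue `0`. -/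
noncomputable def extendDiag (n : ℕ) (e : Fin (2 ^ n) → ℝ) : Fin (2 ^ (n + 1)) → ℝ :=
  fun i => if h : (i : ℕ) < 2 ^ n then e ⟨i, h⟩ else 0

/-- If the ground energy of `H` satisfies `0 < μ₁ ≤ E₀ ≤ 1 - μ₂ < 1`, then
`A₁(H) - 2 A₁(H') ≥ μ₁/(1-μ₁) - (d₀/2ⁿ)·(1/(μ₁ μ₂))`, where `d₀` is the ground-state
degeneracy of `H`. -/
theorem A1_ground_nonzero (n : ℕ) (e : Fin (2 ^ n) → ℝ)
    (he : ∀ i, 0 ≤ e i ∧ e i ≤ 1)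
    (μ1 μ2 : ℝ) (hμ1 : 0 < μ1) (hμ2 : 0 < μ2) (hμ2' : μ2 < 1)
    (hlo : μ1 ≤ groundEnergy n e) (hhi : groundEnergy n e ≤ 1 - μ2) :
    A1diag n e - 2 * A1diag (n + 1) (extendDiag n e) ≥
      μ1 / (1 - μ1) -
        (((Finset.univ.filter (fun i => e i = groundEnergy n e)).card : ℝ) / 2 ^ n) *
          (1 / (μ1 * μ2)) := by
  set E0 := groundEnergy n e with hE0def
  have hE0le : ∀ i, E0 ≤ e i := fun i => Finset.inf'_le e (mem_univ i)
  have hE0pos : 0 < E0 := lt_of_lt_of_le hμ1 hlo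
  have hμ1lt1 : μ1 < 1 := by linarith [hlo.trans hhi]
  have h1μ1 : (0:ℝ) < 1 - μ1 := by linarith
  have hepos : ∀ i, 0 < e i := fun i => lt_of_lt_of_le hE0pos (hE0le i)
  have hμ12 : μ1 + μ2 ≤ 1 := by linarith [hlo.trans hhi]
  set g := μ1 / (1 - μ1) with hgdef
  set C := 1 / (μ1 * μ2) with hCdef
  -- key scalar inequality
  have hkey : g + μ1⁻¹ ≤ C := by
    rw [hgdef, hCdef, inv_eq_one_div,
      div_add_div _ _ (ne_of_gt h1μ1) (ne_of_gt hμ1),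
      div_le_div_iff₀ (by positivity) (by positivity)]
    have ha : μ1 * μ1 + (1 - μ1) ≤ 1 := by nlinarith
    have hb : μ2 ≤ 1 - μ1 := by linarith
    nlinarith [mul_le_mul_of_nonneg_right ha (mul_pos hμ1 hμ2).le,
      mul_le_mul_of_nonneg_left hb hμ1.le]
  -- ground energy of extension is 0
  have hlt2 : (2:ℕ)^n < 2^(n+1) := by
    have := Nat.pow_lt_pow_right (by norm_num : 1 < 2) (Nat.lt_succ_self n)
    exact this
  have hg0 : groundEnergy (n+1) (extendDiag n e) = 0 := by
    apply le_antisymm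
    · calc groundEnergy (n+1) (extendDiag n e)
          ≤ extendDiag n e ⟨2^n, hlt2⟩ := Finset.inf'_le _ (mem_univ _)
        _ = 0 := by simp [extendDiag]
    · apply Finset.le_inf'
      intro i _
      unfold extendDiag
      split
      · exact (hepos _).le
      · exact le_refl 0
  -- the extended sum
  have hsum' : (∑ i, if extendDiag n e i = groundEnergy (n+1) (extendDiag n e) then 0
        else (extendDiag n e i - groundEnergy (n+1) (extendDiag n e))⁻¹)
      = ∑ i : Fin (2^n), (e i)⁻¹ := by
    rw [hg0]
    have hF : ∀ i : Fin (2^(n+1)),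
        (if extendDiag n e i = 0 then 0 else (extendDiag n e i - 0)⁻¹)
        = (fun k : ℕ => if h : k < 2^n then (e ⟨k, h⟩)⁻¹ else 0) (i : ℕ) := by
      intro i
      by_cases h : (i : ℕ) < 2^n
      · rw [show extendDiag n e i = e ⟨i, h⟩ from dif_pos h, sub_zero,
          if_neg (ne_of_gt (hepos _))]
        show _ = if h : (i:ℕ) < 2^n then (e ⟨(i:ℕ), h⟩)⁻¹ else 0
        rw [dif_pos h]
      · rw [show extendDiag n e i = 0 from dif_neg h, sub_zero, if_pos rfl]
        show _ = if h : (i:ℕ) < 2^n then (e ⟨(i:ℕ), h⟩)⁻¹ else 0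
        rw [dif_neg h]
    calc (∑ i, if extendDiag n e i = 0 then 0 else (extendDiag n e i - 0)⁻¹)
        = ∑ i : Fin (2^(n+1)), (fun k : ℕ => if h : k < 2^n then (e ⟨k, h⟩)⁻¹ else 0) (i:ℕ) :=
          Finset.sum_congr rfl (fun i _ => hF i)
      _ = ∑ k ∈ Finset.range (2^(n+1)), (fun k : ℕ => if h : k < 2^n then (e ⟨k, h⟩)⁻¹ else 0) k :=
          Fin.sum_univ_eq_sum_range (fun k : ℕ => if h : k < 2^n then (e ⟨k, h⟩)⁻¹ else 0) (2^(n+1))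
      _ = ∑ k ∈ Finset.range (2^n), (fun k : ℕ => if h : k < 2^n then (e ⟨k, h⟩)⁻¹ else 0) k := by
          rw [Finset.range_eq_Ico,
            ← Finset.sum_Ico_consecutive _ (Nat.zero_le (2^n)) (le_of_lt hlt2)]
          have : ∑ k ∈ Finset.Ico (2^n) (2^(n+1)),
              (fun k : ℕ => if h : k < 2^n then (e ⟨k, h⟩)⁻¹ else 0) k = 0 := by
            apply Finset.sum_eq_zero
            intro k hk
            rw [Finset.mem_Ico] at hk
            exact dif_neg (by omega)
          rw [this, add_zero, ← Finset.range_eq_Ico]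
      _ = ∑ i : Fin (2^n), (fun k : ℕ => if h : k < 2^n then (e ⟨k, h⟩)⁻¹ else 0) (i:ℕ) :=
          (Fin.sum_univ_eq_sum_range (fun k : ℕ => if h : k < 2^n then (e ⟨k, h⟩)⁻¹ else 0) (2^n)).symm
      _ = ∑ i : Fin (2^n), (e i)⁻¹ :=
          Finset.sum_congr rfl (fun i _ => dif_pos i.isLt)
  -- per-term bound
  have hterm : ∀ i : Fin (2^n),
      (if e i = E0 then 0 else (e i - E0)⁻¹) - (e i)⁻¹
        ≥ (if e i = E0 then g - C else g) := by
    intro i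
    by_cases h : e i = E0
    · rw [if_pos h, if_pos h, h, zero_sub, ge_iff_le, sub_le_iff_le_add]
      have : E0⁻¹ ≤ μ1⁻¹ := by
        apply inv_anti₀ hμ1 hlo
      linarith [hkey]
    · rw [if_neg h, if_neg h]
      have hlt : E0 < e i := lt_of_le_of_ne (hE0le i) (Ne.symm h)
      have hd : 0 < e i - E0 := sub_pos.2 hlt
      have hx1 : e i ≤ 1 := (he i).2
      have heq : (e i - E0)⁻¹ - (e i)⁻¹ = E0 / ((e i - E0) * e i) := by
        rw [inv_eq_one_div, inv_eq_one_div,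
          div_sub_div _ _ (ne_of_gt hd) (ne_of_gt (hepos i))]
        congr 1
        ring
      rw [heq, hgdef, ge_iff_le]
      apply div_le_div₀ hE0pos.le hlo (mul_pos hd (hepos i))
      nlinarith [hepos i]
  -- sum of the lower bounds
  have hcount : (∑ i : Fin (2^n), (if e i = E0 then g - C else g))
      = (2:ℝ)^n * g - ((Finset.univ.filter (fun i => e i = E0)).card : ℝ) * C := by
    have : ∀ i : Fin (2^n), (if e i = E0 then g - C else g)
        = g - (if e i = E0 then C else 0) := by
      intro i; split_ifs <;> ring
    rw [Finset.sum_congr rfl (fun i _ => this i), Finset.sum_sub_distrib,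
      Finset.sum_const, ← Finset.sum_filter, Finset.sum_const]
    simp [Fintype.card_fin, nsmul_eq_mul]
  have hS : (∑ i : Fin (2^n), ((if e i = E0 then 0 else (e i - E0)⁻¹) - (e i)⁻¹))
      ≥ (2:ℝ)^n * g - ((Finset.univ.filter (fun i => e i = E0)).card : ℝ) * C := by
    rw [← hcount]
    exact Finset.sum_le_sum (fun i _ => hterm i)
  -- assemble
  have h2n : ((2:ℝ)^n) ≠ 0 := by positivity
  have hA' : 2 * A1diag (n+1) (extendDiag n e) = ((2:ℝ)^n)⁻¹ * ∑ i : Fin (2^n), (e i)⁻¹ := by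
    rw [A1diag, hsum', pow_succ]
    field_simp
  rw [A1diag, hA', ← mul_sub, ← Finset.sum_sub_distrib]
  have := mul_le_mul_of_nonneg_left hS (by positivity : (0:ℝ) ≤ ((2:ℝ)^n)⁻¹)
  calc g - (((Finset.univ.filter (fun i => e i = E0)).card : ℝ) / 2^n) * C
      = ((2:ℝ)^n)⁻¹ * ((2:ℝ)^n * g - ((Finset.univ.filter (fun i => e i = E0)).card : ℝ) * C) := by
        field_simp
    _ ≤ ((2:ℝ)^n)⁻¹ * ∑ i : Fin (2^n), ((if e i = E0 then 0 else (e i - E0)⁻¹) - (e i)⁻¹) := this
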